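/- For every integer n ≥ 2, let p_n = 1 - (1 - 1/n)^n and q_n = (1 - 1/n)^{2n} - (1 - 2/n)^n. Then p_n/(1 - p_n) + q_n/(1 - p_n)^2 = ((1 - 1/n)^n - (1 - 2/n)^n)/(1 - 1/n)^{2n}, and this quantity is at most 16/e, hence strictly less than 6. -/

import Mathlib

/-- For every integer `n ≥ 2`, with `p = 1 - (1 - 1/n)^n` and
`q = (1 - 1/n)^(2n) - (1 - 2/n)^n`, one has
`p/(1-p) + q/(1-p)^2 = ((1 - 1/n)^n - (1 - 2/n)^n)/(1 - 1/n)^(2n)`,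
and this quantity is at most `16/e`, hence strictly less than `6`. -/
theorem stmt0 (n : ℕ) (hn : 2 ≤ n) (p q : ℝ)
    (hp : p = 1 - (1 - 1/(n:ℝ))^n)
    (hq : q = (1 - 1/(n:ℝ))^(2*n) - (1 - 2/(n:ℝ))^n) :
    p/(1-p) + q/(1-p)^2
      = ((1 - 1/(n:ℝ))^n - (1 - 2/(n:ℝ))^n)/(1 - 1/(n:ℝ))^(2*n) ∧
    ((1 - 1/(n:ℝ))^n - (1 - 2/(n:ℝ))^n)/(1 - 1/(n:ℝ))^(2*n) ≤ 16 / Real.exp 1 ∧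
    ((1 - 1/(n:ℝ))^n - (1 - 2/(n:ℝ))^n)/(1 - 1/(n:ℝ))^(2*n) < 6 := by
  have hn2 : (2:ℝ) ≤ (n:ℝ) := by exact_mod_cast hn
  have hnpos : (0:ℝ) < (n:ℝ) := by linarith
  have hxpos : (0:ℝ) < 1 - 1/(n:ℝ) := by
    have h1 : 1/(n:ℝ) ≤ 1/2 := by
      apply div_le_div_of_nonneg_left (by norm_num) (by norm_num) hn2
    linarith
  set x : ℝ := 1 - 1/(n:ℝ) with hx
  set a : ℝ := x^n with ha
  have hapos : 0 < a := pow_pos hxpos n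
  have hbnn : (0:ℝ) ≤ (1 - 2/(n:ℝ)) := by
    have : 2/(n:ℝ) ≤ 1 := by rw [div_le_one hnpos]; linarith
    linarith
  set b : ℝ := (1 - 2/(n:ℝ))^n with hb
  have hbpos : 0 ≤ b := pow_nonneg hbnn n
  have h2n : x^(2*n) = a^2 := by rw [ha, ← pow_mul, mul_comm]
  have heq : p/(1-p) + q/(1-p)^2 = (a - b)/a^2 := by
    rw [hp, hq, h2n]
    have hane : a ≠ 0 := hapos.ne'
    rw [show (1:ℝ) - (1 - a) = a by ring, div_add_div _ _ hane (pow_ne_zero 2 hane),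
      div_eq_div_iff (mul_ne_zero hane (pow_ne_zero 2 hane)) (pow_ne_zero 2 hane)]
    ring
  have hmain : (a - b)/a^2 ≤ 1/a := by
    have h1 : (a - b)/a^2 ≤ a/a^2 := by
      gcongr
      linarith
    have h2 : a/a^2 = 1/a := by
      rw [sq, ← div_div, div_self hapos.ne', one_div]
    rw [h2] at h1
    exact h1
  have hexp5 : Real.exp (5/2 : ℝ) ≤ 16 := by
    have h1 : Real.exp (5/2 : ℝ)^2 = Real.exp 1 ^ 5 := by
      rw [← Real.exp_nat_mul, ← Real.exp_nat_mul]
      norm_num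
    have h2 : Real.exp 1 ^ 5 < (2.7182818286:ℝ)^5 :=
      pow_lt_pow_left₀ Real.exp_one_lt_d9 (Real.exp_pos 1).le (by norm_num)
    have h4 : ((2.7182818286:ℝ))^5 < 256 := by norm_num
    have h3 := Real.exp_pos (5/2 : ℝ)
    nlinarith
  have hbound : 1/a ≤ 16 / Real.exp 1 := by
    rcases eq_or_lt_of_le hn with h2 | h3
    · -- n = 2
      have hn2' : n = 2 := h2.symm
      subst hn2'
      have : a = 1/4 := by rw [ha, hx]; norm_num
      rw [this]
      rw [le_div_iff₀ (Real.exp_pos 1)]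
      nlinarith [Real.exp_one_lt_d9]
    · -- n ≥ 3
      have hn3 : (3:ℝ) ≤ (n:ℝ) := by exact_mod_cast h3
      have hn1pos : (0:ℝ) < (n:ℝ) - 1 := by linarith
      have hinv : x⁻¹ ≤ Real.exp (1/((n:ℝ)-1)) := by
        have hxi : x⁻¹ = 1 + 1/((n:ℝ)-1) := by
          rw [hx]
          field_simp
          ring
        rw [hxi]
        have := Real.add_one_le_exp (1/((n:ℝ)-1))
        linarith
      have h1a : 1/a = (x⁻¹)^n := by rw [ha, one_div, inv_pow]
      have hstep : (x⁻¹)^n ≤ Real.exp ((n:ℝ)/((n:ℝ)-1)) := by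
        calc (x⁻¹)^n ≤ (Real.exp (1/((n:ℝ)-1)))^n := by
              apply pow_le_pow_left₀ (inv_nonneg.mpr hxpos.le) hinv
          _ = Real.exp ((n:ℝ) * (1/((n:ℝ)-1))) := by rw [Real.exp_nat_mul]
          _ = Real.exp ((n:ℝ)/((n:ℝ)-1)) := by ring_nf
      have hfrac : (n:ℝ)/((n:ℝ)-1) ≤ 3/2 := by
        rw [div_le_div_iff₀ hn1pos (by norm_num : (0:ℝ) < 2)]
        linarith
      have hstep2 : Real.exp ((n:ℝ)/((n:ℝ)-1)) ≤ Real.exp (3/2 : ℝ) :=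
        Real.exp_le_exp.mpr hfrac
      have hstep3 : Real.exp (3/2 : ℝ) ≤ 16 / Real.exp 1 := by
        rw [le_div_iff₀ (Real.exp_pos 1), ← Real.exp_add]
        have h32 : (3/2:ℝ) + 1 = 5/2 := by norm_num
        rw [h32]
        exact hexp5
      rw [h1a]
      linarith
  have hlt6 : (16:ℝ) / Real.exp 1 < 6 := by
    rw [div_lt_iff₀ (Real.exp_pos 1)]
    nlinarith [Real.exp_one_gt_d9]
  refine ⟨?_, ?_, ?_⟩
  · rw [heq, h2n]
  · rw [h2n]
    calc (a - b)/a^2 ≤ 1/a := hmain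
      _ ≤ 16 / Real.exp 1 := hbound
  · rw [h2n]
    calc (a - b)/a^2 ≤ 1/a := hmain
      _ ≤ 16 / Real.exp 1 := hbound
      _ < 6 := hlt6
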